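/- Let S be a set of n ≥ 3 points in the plane in convex position, and let a, b, s, t ∈ S be points such that the segments ab and st are disjoint edges of the boundary of the convex hull of S. Then there is no plane (crossing-free) Hamiltonian path on S with endpoints s and t that avoids the segment ab. -/

import Mathlib

open Set
open scoped Classical

noncomputable section

/-- Points in the plane. -/
abbrev Pt : Type := ℝ × ℝ

/-- Orientation determinant of the triple `(a, b, p)`:
positive iff `p` lies strictly to the left of the directed line from `a` to `b`. -/
def det3 (a b p : Pt) : ℝ :=
  (b.1 - a.1) * (p.2 - a.2) - (b.2 - a.2) * (p.1 - a.1)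

/-- A finite point set is in general position if no three of its points are collinear. -/
def GenPos (S : Finset Pt) : Prop :=
  ∀ p ∈ S, ∀ q ∈ S, ∀ r ∈ S,
    p ≠ q → p ≠ r → q ≠ r → ¬ Collinear ℝ ({p, q, r} : Set Pt)

/-- The list of (directed) edges of a polygonal path given by its list of vertices. -/
def edgeList (l : List Pt) : List (Pt × Pt) := l.zip l.tail

/-- The segment `ab` is an edge of the path `l`, i.e. `a` and `b` are consecutive on `l`. -/
def IsEdgeOf (a b : Pt) (l : List Pt) : Prop :=
  (a, b) ∈ edgeList l ∨ (b, a) ∈ edgeList l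

/-- `l` is a plane (crossing-free) Hamiltonian path on the point set `S`:
its vertices are exactly the points of `S`, each visited once, and any two distinct
edges intersect only in common endpoints. -/
def PlanePath (S : Finset Pt) (l : List Pt) : Prop :=
  l.Nodup ∧ l.toFinset = S ∧
  ∀ e ∈ edgeList l, ∀ f ∈ edgeList l, e ≠ f →
    segment ℝ e.1 e.2 ∩ segment ℝ f.1 f.2 ⊆
      (({e.1, e.2} : Set Pt) ∩ ({f.1, f.2} : Set Pt))

/-- Two paths are edge-disjoint: no segment is an edge of both. -/
def EdgeDisjoint (l₁ l₂ : List Pt) : Prop :=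
  ∀ x y : Pt, IsEdgeOf x y l₁ → ¬ IsEdgeOf x y l₂

/-- `p` is a vertex of the boundary of the convex hull of `S`. -/
def HullVertex (S : Finset Pt) (p : Pt) : Prop :=
  p ∈ Set.extremePoints ℝ (convexHull ℝ (S : Set Pt))

/-- `ab` is an edge of the boundary of the convex hull of `S`, i.e. `a` and `b` are
consecutive hull vertices: all other points of `S` lie strictly on one side of line `ab`. -/
def IsHullEdge (S : Finset Pt) (a b : Pt) : Prop :=
  a ∈ S ∧ b ∈ S ∧ a ≠ b ∧
  ((∀ p ∈ S, p ≠ a → p ≠ b → 0 < det3 a b p) ∨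
   (∀ p ∈ S, p ≠ a → p ≠ b → det3 a b p < 0))

/-- The segment `xy` is a bridge over the line through `a` and `b`:
it crosses the line `ℓ(ab)` but not the segment `ab`. -/
def IsBridge (a b x y : Pt) : Prop :=
  det3 a b x * det3 a b y < 0 ∧ segment ℝ x y ∩ segment ℝ a b = ∅

/-- The set of common edges of the two paths is exactly the segment `ab`. -/
def SharesExactly (a b : Pt) (l₁ l₂ : List Pt) : Prop :=
  IsEdgeOf a b l₁ ∧ IsEdgeOf a b l₂ ∧
  ∀ x y : Pt, IsEdgeOf x y l₁ → IsEdgeOf x y l₂ → ({x, y} : Set Pt) = ({a, b} : Set Pt)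

lemma det3_cyc (a b c : Pt) : det3 a b c = det3 b c a := by simp [det3]; ring
lemma det3_swap12 (a b c : Pt) : det3 b a c = - det3 a b c := by simp [det3]; ring
lemma det3_swap23 (a b c : Pt) : det3 a c b = - det3 a b c := by simp [det3]; ring

lemma det3_sum (s u t p : Pt) :
    det3 u t p + det3 t s p + det3 s u p = det3 s u t := by simp [det3]; ring

lemma det3_bary (s u t p : Pt) :
    (det3 u t p) • s + (det3 t s p) • u + (det3 s u p) • t = (det3 s u t) • p := by
  have h1 : ((det3 u t p) • s + (det3 t s p) • u + (det3 s u p) • t).1 = ((det3 s u t) • p).1 := by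
    simp [det3, Prod.smul_def]; ring
  have h2 : ((det3 u t p) • s + (det3 t s p) • u + (det3 s u p) • t).2 = ((det3 s u t) • p).2 := by
    simp [det3, Prod.smul_def]; ring
  exact Prod.ext h1 h2

lemma det3_affine (s q u v : Pt) (τ : ℝ) :
    det3 s q (u + τ • (v - u)) = det3 s q u + τ * (det3 s q v - det3 s q u) := by
  simp [det3, Prod.smul_def]; ring

/-- parametrize points on the line through p q -/
lemma det3_param {p q r : Pt} (hpq : p ≠ q) (h : det3 p q r = 0) :
    ∃ k : ℝ, r = p + k • (q - p) := by
  by_cases h1 : q.1 - p.1 ≠ 0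
  · refine ⟨(r.1 - p.1) / (q.1 - p.1), ?_⟩
    have h2 : r.2 - p.2 = (r.1 - p.1) / (q.1 - p.1) * (q.2 - p.2) := by
      field_simp
      simp [det3] at h; nlinarith [h]
    have : r.1 - p.1 = (r.1 - p.1) / (q.1 - p.1) * (q.1 - p.1) := by field_simp
    refine Prod.ext ?_ ?_ <;> simp [Prod.smul_def] <;> linarith
  · push_neg at h1
    have h1' : q.1 = p.1 := by
      have := sub_eq_zero.mp h1; linarith
    have h2 : q.2 - p.2 ≠ 0 := by
      intro hc
      apply hpq
      have hc2 : q.2 = p.2 := by linarith [sub_eq_zero.mp hc]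
      exact Prod.ext h1'.symm hc2.symm
    refine ⟨(r.2 - p.2) / (q.2 - p.2), ?_⟩
    have h3 : r.1 = p.1 := by
      simp [det3, h1] at h
      rcases h with h' | h'
      · exact absurd h' h2
      · linarith [sub_eq_zero.mp h']
    have h4 : r.2 - p.2 = (r.2 - p.2) / (q.2 - p.2) * (q.2 - p.2) := by field_simp
    refine Prod.ext ?_ ?_ <;> simp [Prod.smul_def, h1, h3] <;> linarith

/-- an extreme point stays extreme in any subset containing it -/
lemma extreme_mono {A B : Set Pt} {x : Pt} (hBA : B ⊆ A) (hxB : x ∈ B)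
    (hx : x ∈ Set.extremePoints ℝ A) : x ∈ Set.extremePoints ℝ B := by
  refine ⟨hxB, fun x₁ h₁ x₂ h₂ hseg => hx.2 (hBA h₁) (hBA h₂) hseg⟩

/-- a hull vertex is not in the convex hull of the other points -/
lemma hullVertex_not_mem_rest {S : Finset Pt} {p : Pt}
    (hp : HullVertex S p) (hpS : p ∈ S) :
    p ∉ convexHull ℝ ((S : Set Pt) \ {p}) := by
  intro hmem
  have h1 : p ∈ Set.extremePoints ℝ (convexHull ℝ ((S : Set Pt) \ {p})) := by
    refine extreme_mono (convexHull_mono diff_subset) hmem hp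
  have h2 := extremePoints_convexHull_subset h1
  simp at h2

/-- general position: no vanishing determinant among distinct hull vertices -/
lemma det3_ne_zero {S : Finset Pt} (hconv : ∀ p ∈ S, HullVertex S p)
    {p q r : Pt} (hp : p ∈ S) (hq : q ∈ S) (hr : r ∈ S)
    (hpq : p ≠ q) (hpr : p ≠ r) (hqr : q ≠ r) : det3 p q r ≠ 0 := by
  intro h
  obtain ⟨k, hk⟩ := det3_param hpq h
  -- r = (1-k) • p + k • q
  have hr' : r = (1-k) • p + k • q := by
    rw [hk]; module
  have seg : ∀ (m u v : Pt), m ∈ S → u ∈ S → v ∈ S → u ≠ m → v ≠ m →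
      m ∈ segment ℝ u v → False := by
    intro m u v hm hu hv hum hvm hseg
    apply hullVertex_not_mem_rest (hconv m hm) hm
    have : segment ℝ u v ⊆ convexHull ℝ ((S : Set Pt) \ {m}) := by
      rw [← convexHull_pair]
      apply convexHull_mono
      intro x hx
      simp at hx
      rcases hx with rfl | rfl
      · exact ⟨hu, hum⟩
      · exact ⟨hv, hvm⟩
    exact this hseg
  rcases le_or_gt k 0 with hk0 | hk0
  · -- p ∈ segment r q : p = (1/(1-k)) r + (-k/(1-k)) q
    rcases eq_or_lt_of_le hk0 with rfl | hk0
    · simp at hr'; exact hpr hr'.symm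
    have hne : (1:ℝ) - k > 0 := by linarith
    have hne' : (1:ℝ) - k ≠ 0 := ne_of_gt hne
    refine seg p r q hp hr hq hpr.symm hpq.symm ?_
    refine ⟨1/(1-k), -k/(1-k), by positivity, by apply div_nonneg <;> linarith, ?_, ?_⟩
    · field_simp; ring
    · rw [hr']; match_scalars <;> field_simp <;> ring
  · rcases le_or_gt k 1 with hk1 | hk1
    · -- r ∈ segment p q
      refine seg r p q hr hp hq hpr hqr ?_
      exact ⟨1-k, k, by linarith, by linarith, by ring, hr'.symm⟩
    · -- q ∈ segment p r : q = (1 - 1/k) p + (1/k) r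
      refine seg q p r hq hp hr hpq hqr.symm ?_
      refine ⟨1-1/k, 1/k, by rw [sub_nonneg]; apply div_le_one_of_le₀ <;> linarith,
        by positivity, by ring, ?_⟩
      rw [hr']; match_scalars <;> field_simp <;> ring

/-- a point of the hull on the line through two hull vertices is on the segment -/
lemma mem_segment_of_on_line {S : Finset Pt} {p q z : Pt}
    (hpv : HullVertex S p) (hqv : HullVertex S q) (hpq : p ≠ q)
    (hz : z ∈ convexHull ℝ (S : Set Pt)) (hdet : det3 p q z = 0) :
    z ∈ segment ℝ p q := by
  obtain ⟨k, hk⟩ := det3_param hpq hdet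
  have hz' : z = (1-k) • p + k • q := by rw [hk]; module
  have hpS : p ∈ convexHull ℝ (S : Set Pt) := hpv.1
  have hqS : q ∈ convexHull ℝ (S : Set Pt) := hqv.1
  rcases le_or_gt k 0 with hk0 | hk0
  · rcases eq_or_lt_of_le hk0 with rfl | hk0
    · simp at hz'; rw [hz']; exact left_mem_segment ℝ p q
    -- p ∈ openSegment z q
    exfalso
    have hne : (1:ℝ) - k > 0 := by linarith
    have hne' : (1:ℝ) - k ≠ 0 := ne_of_gt hne
    have : p ∈ openSegment ℝ z q := by
      refine ⟨1/(1-k), -k/(1-k), by positivity, by apply div_pos <;> linarith, ?_, ?_⟩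
      · field_simp; ring
      · rw [hz']; match_scalars <;> field_simp <;> ring
    exact hpq (hpv.2 hqS hz (by rwa [openSegment_symm] at this)).symm
  · rcases le_or_gt k 1 with hk1 | hk1
    · rw [hz']; exact ⟨1-k, k, by linarith, by linarith, by ring, rfl⟩
    · exfalso
      have : q ∈ openSegment ℝ p z := by
        refine ⟨1-1/k, 1/k, by rw [sub_pos]; rw [div_lt_one] <;> linarith,
          by positivity, by ring, ?_⟩
        rw [hz']; match_scalars <;> field_simp <;> ring
      exact hpq (hqv.2 hpS hz this)

lemma edgeList_cons₂ (x y : Pt) (L : List Pt) :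
    edgeList (x :: y :: L) = (x, y) :: edgeList (y :: L) := by
  simp [edgeList]

lemma mem_edgeList_tail {e : Pt × Pt} {L : List Pt} (x : Pt)
    (h : e ∈ edgeList L) : e ∈ edgeList (x :: L) := by
  cases L with
  | nil => simp [edgeList] at h
  | cons y L' => rw [edgeList_cons₂]; exact List.mem_cons_of_mem _ h

lemma edge_mem_left {u v : Pt} {L : List Pt} (h : (u, v) ∈ edgeList L) : u ∈ L :=
  (List.of_mem_zip h).1

lemma edge_mem_right {u v : Pt} {L : List Pt} (h : (u, v) ∈ edgeList L) : v ∈ L :=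
  List.mem_of_mem_tail (List.of_mem_zip h).2

lemma sign_change (f : Pt → ℝ) :
    ∀ L : List Pt, (∀ p ∈ L, f p ≠ 0) → ∀ x ∈ L, ∀ y ∈ L, 0 < f x → f y < 0 →
      ∃ u v, (u, v) ∈ edgeList L ∧ f u * f v < 0 := by
  intro L
  induction L with
  | nil => intro _ x hx; simp at hx
  | cons h tl ih =>
    intro hne x hx y hy hfx hfy
    cases tl with
    | nil =>
      simp at hx hy
      subst hx; subst hy; linarith
    | cons h2 tl2 =>
      by_cases hc : f h * f h2 < 0
      · exact ⟨h, h2, by rw [edgeList_cons₂]; exact List.mem_cons_self, hc⟩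
      · push_neg at hc
        have hh : f h ≠ 0 := hne h (by simp)
        have hh2 : f h2 ≠ 0 := hne h2 (by simp)
        have hne' : ∀ p ∈ h2 :: tl2, f p ≠ 0 := fun p hp => hne p (List.mem_cons_of_mem _ hp)
        have hx' : ∃ x' ∈ h2 :: tl2, 0 < f x' := by
          rcases List.mem_cons.mp hx with rfl | hx2
          · refine ⟨h2, by simp, ?_⟩
            rcases lt_or_gt_of_ne hh2 with hlt | hgt
            · nlinarith
            · exact hgt
          · exact ⟨x, hx2, hfx⟩
        have hy' : ∃ y' ∈ h2 :: tl2, f y' < 0 := by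
          rcases List.mem_cons.mp hy with rfl | hy2
          · refine ⟨h2, by simp, ?_⟩
            rcases lt_or_gt_of_ne hh2 with hlt | hgt
            · exact hlt
            · nlinarith
          · exact ⟨y, hy2, hfy⟩
        obtain ⟨x', hx'm, hx'p⟩ := hx'
        obtain ⟨y', hy'm, hy'n⟩ := hy'
        obtain ⟨u, v, huv, hprod⟩ := ih hne' x' hx'm y' hy'm hx'p hy'n
        exact ⟨u, v, mem_edgeList_tail _ huv, hprod⟩

/-- The first edge of a plane Hamiltonian path on points in convex position is a hull edge. -/
lemma first_edge_hull {S : Finset Pt} (hconv : ∀ p ∈ S, HullVertex S p)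
    {s q : Pt} {L : List Pt} (h : PlanePath S (s :: q :: L)) : IsHullEdge S s q := by
  obtain ⟨hnd, hTF, hpl⟩ := h
  have hsS : s ∈ S := by rw [← hTF]; simp
  have hqS : q ∈ S := by rw [← hTF]; simp
  have hsq : s ≠ q := by
    intro hc; rw [List.nodup_cons] at hnd; exact hnd.1 (hc ▸ List.mem_cons_self)
  have hsL : s ∉ L := by
    rw [List.nodup_cons] at hnd; exact fun hc => hnd.1 (List.mem_cons_of_mem _ hc)
  have hqL : q ∉ L := by
    rw [List.nodup_cons] at hnd; rw [List.nodup_cons] at hnd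
    exact hnd.2.1
  have hmemL : ∀ p ∈ S, p ≠ s → p ≠ q → p ∈ L := by
    intro p hp hps hpq
    rw [← hTF] at hp; simp at hp
    rcases hp with rfl | rfl | hp
    · exact absurd rfl hps
    · exact absurd rfl hpq
    · exact hp
  have hLS : ∀ p ∈ L, p ∈ S := by
    intro p hp; rw [← hTF]; simp [hp]
  have hfne : ∀ p ∈ L, det3 s q p ≠ 0 := by
    intro p hp
    have hps : p ≠ s := fun hc => hsL (hc ▸ hp)
    have hpq : p ≠ q := fun hc => hqL (hc ▸ hp)
    exact det3_ne_zero hconv hsS hqS (hLS p hp) hsq (Ne.symm hps) (Ne.symm hpq)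
  have key : ∀ x ∈ L, ∀ y ∈ L, 0 < det3 s q x → det3 s q y < 0 → False := by
    intro x hx y hy hfx hfy
    obtain ⟨u, v, huv, hprod⟩ := sign_change (det3 s q) L hfne x hx y hy hfx hfy
    have huL : u ∈ L := edge_mem_left huv
    have hvL : v ∈ L := edge_mem_right huv
    have hfu : det3 s q u ≠ 0 := hfne u huL
    have hfv : det3 s q v ≠ 0 := hfne v hvL
    have hden : det3 s q u - det3 s q v ≠ 0 := by
      intro hc; rw [sub_eq_zero] at hc; rw [hc] at hprod
      exact absurd hprod (not_lt.mpr (mul_self_nonneg _))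
    set τ : ℝ := det3 s q u / (det3 s q u - det3 s q v) with hτ
    have hτ01 : 0 ≤ τ ∧ τ ≤ 1 := by
      rcases lt_or_gt_of_ne hfu with hu0 | hu0
      · have hv0 : 0 < det3 s q v := by nlinarith
        constructor
        · rw [hτ, div_nonneg_iff]; right; constructor <;> linarith
        · rw [hτ, div_le_one_of_neg] <;> linarith
      · have hv0 : det3 s q v < 0 := by nlinarith
        constructor
        · apply div_nonneg <;> linarith
        · rw [div_le_one] <;> linarith
    set z : Pt := u + τ • (v - u) with hz
    have hzseg : z ∈ segment ℝ u v := by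
      refine ⟨1 - τ, τ, by linarith [hτ01.2], hτ01.1, by ring, ?_⟩
      rw [hz]; module
    have hfz : det3 s q z = 0 := by
      rw [hz, det3_affine, hτ]
      field_simp
      ring
    have hzhull : z ∈ convexHull ℝ (S : Set Pt) :=
      segment_subset_convexHull (hLS u huL) (hLS v hvL) hzseg
    have hzsq : z ∈ segment ℝ s q :=
      mem_segment_of_on_line (hconv s hsS) (hconv q hqS) hsq hzhull hfz
    have heuv : ((u, v) : Pt × Pt) ∈ edgeList (s :: q :: L) :=
      mem_edgeList_tail _ (mem_edgeList_tail _ huv)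
    have hesq : ((s, q) : Pt × Pt) ∈ edgeList (s :: q :: L) := by
      rw [edgeList_cons₂]; exact List.mem_cons_self
    have hneq : ((u, v) : Pt × Pt) ≠ (s, q) := by
      intro hc
      have : u = s := congrArg Prod.fst hc
      exact hsL (this ▸ huL)
    have := hpl (u, v) heuv (s, q) hesq hneq ⟨hzseg, hzsq⟩
    simp at this
    rcases this.1 with h1 | h1
    · exact hfu (h1 ▸ hfz)
    · exact hfv (h1 ▸ hfz)
  refine ⟨hsS, hqS, hsq, ?_⟩
  by_cases hpos : ∀ p ∈ S, p ≠ s → p ≠ q → 0 < det3 s q p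
  · exact Or.inl hpos
  · right
    push_neg at hpos
    obtain ⟨p2, hp2S, hp2s, hp2q, hp2⟩ := hpos
    have hp2L : p2 ∈ L := hmemL p2 hp2S hp2s hp2q
    have hp2neg : det3 s q p2 < 0 := lt_of_le_of_ne hp2 (hfne p2 hp2L)
    intro p hpS hps hpq
    have hpL : p ∈ L := hmemL p hpS hps hpq
    rcases lt_or_gt_of_ne (hfne p hpL) with hlt | hgt
    · exact hlt
    · exact absurd (key p hpL p2 hp2L hgt hp2neg) (fun h => h)

lemma det3_bary' (ε : ℝ) (s u t p : Pt) :
    (ε * det3 u t p) • s + (ε * det3 t s p) • u + (ε * det3 s u p) • t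
      = (ε * det3 s u t) • p := by
  refine Prod.ext ?_ ?_ <;> simp [det3, Prod.smul_def] <;> ring

lemma hull_edge_merge {S : Finset Pt} (hconv : ∀ p ∈ S, HullVertex S p)
    {s u t : Pt} (hsu : IsHullEdge S s u) (hst : IsHullEdge S s t) (hut : u ≠ t) :
    IsHullEdge (S.erase s) u t := by
  obtain ⟨hsS, huS, hsu', hsuB⟩ := hsu
  obtain ⟨-, htS, hst', hstB⟩ := hst
  obtain ⟨ε, hε, hεpos⟩ : ∃ ε : ℝ, (ε = 1 ∨ ε = -1) ∧
      ∀ p ∈ S, p ≠ s → p ≠ u → 0 < ε * det3 s u p := by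
    rcases hsuB with h | h
    · exact ⟨1, Or.inl rfl, fun p hp h1 h2 => by simpa using h p hp h1 h2⟩
    · exact ⟨-1, Or.inr rfl, fun p hp h1 h2 => by simpa using h p hp h1 h2⟩
  obtain ⟨δ, hδ, hδpos⟩ : ∃ δ : ℝ, (δ = 1 ∨ δ = -1) ∧
      ∀ p ∈ S, p ≠ s → p ≠ t → 0 < δ * det3 s t p := by
    rcases hstB with h | h
    · exact ⟨1, Or.inl rfl, fun p hp h1 h2 => by simpa using h p hp h1 h2⟩
    · exact ⟨-1, Or.inr rfl, fun p hp h1 h2 => by simpa using h p hp h1 h2⟩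
  have hD : 0 < ε * det3 s u t := hεpos t htS (Ne.symm hst') hut.symm
  have hδu : 0 < δ * det3 s t u := hδpos u huS (Ne.symm hsu') hut
  have hδu' : 0 < -(δ * det3 s u t) := by
    rw [det3_swap23] at hδu; linarith
  have hδε : δ = -ε := by
    rcases hε with rfl | rfl <;> rcases hδ with rfl | rfl <;> first
      | nlinarith | rfl | (norm_num)
  have key : ∀ p ∈ S, p ≠ s → p ≠ u → p ≠ t → ε * det3 u t p < 0 := by
    intro p hpS hps hpu hpt
    by_contra hcon
    push_neg at hcon
    have hne : det3 u t p ≠ 0 :=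
      det3_ne_zero hconv huS htS hpS hut (Ne.symm hpu) (Ne.symm hpt)
    have hεne : ε ≠ 0 := by rcases hε with rfl | rfl <;> norm_num
    have hd1 : 0 < ε * det3 u t p := by
      rcases lt_or_eq_of_le hcon with h | h
      · exact h
      · exfalso
        rcases mul_eq_zero.mp h.symm with h' | h'
        · exact hεne h'
        · exact hne h' 
    have hd3 : 0 < ε * det3 s u p := hεpos p hpS hps hpu
    have hd2 : 0 < ε * det3 t s p := by
      have h2 := hδpos p hpS hps hpt
      rw [hδε] at h2
      rw [det3_swap12]
      nlinarith
    set d1 := ε * det3 u t p with hd1def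
    set d2 := ε * det3 t s p with hd2def
    set d3 := ε * det3 s u p with hd3def
    have hbar : d1 • s + d2 • u + d3 • t = (ε * det3 s u t) • p := det3_bary' ε s u t p
    have hsum : d1 + d2 + d3 = ε * det3 s u t := by
      rw [hd1def, hd2def, hd3def, ← mul_add, ← mul_add, det3_sum]
    set c := ε * det3 s u t with hcdef
    have hc : 0 < c := hD
    have hm : (d2/(d2+d3)) • u + (d3/(d2+d3)) • t ∈ segment ℝ u t := by
      refine ⟨d2/(d2+d3), d3/(d2+d3), by positivity, by positivity, ?_, rfl⟩
      field_simp
    have hpm : p ∈ segment ℝ s ((d2/(d2+d3)) • u + (d3/(d2+d3)) • t) := by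
      refine ⟨d1/c, (d2+d3)/c, by positivity, by positivity, ?_, ?_⟩
      · field_simp; linarith
      · have hp' : p = (1/c) • (d1 • s + d2 • u + d3 • t) := by
          rw [hbar, smul_smul, one_div, inv_mul_cancel₀ (ne_of_gt hc), one_smul]
        rw [hp']
        match_scalars <;> field_simp <;> ring
    have hrest : p ∈ convexHull ℝ ((S : Set Pt) \ {p}) := by
      have hsR : s ∈ convexHull ℝ ((S : Set Pt) \ {p}) :=
        subset_convexHull ℝ _ ⟨hsS, by simpa using Ne.symm hps⟩
      have huR : u ∈ ((S : Set Pt) \ {p}) := ⟨huS, by simpa using Ne.symm hpu⟩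
      have htR : t ∈ ((S : Set Pt) \ {p}) := ⟨htS, by simpa using Ne.symm hpt⟩
      have hmR : ((d2/(d2+d3)) • u + (d3/(d2+d3)) • t) ∈ convexHull ℝ ((S : Set Pt) \ {p}) :=
        segment_subset_convexHull huR htR hm
      exact (convex_convexHull ℝ _).segment_subset hsR hmR hpm
    exact hullVertex_not_mem_rest (hconv p hpS) hpS hrest
  refine ⟨Finset.mem_erase.mpr ⟨Ne.symm hsu', huS⟩, Finset.mem_erase.mpr ⟨Ne.symm hst', htS⟩,
    hut, ?_⟩
  rcases hε with rfl | rfl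
  · right
    intro p hp hpu hpt
    obtain ⟨hps, hpS⟩ := Finset.mem_erase.mp hp
    have := key p hpS hps hpu hpt
    linarith
  · left
    intro p hp hpu hpt
    obtain ⟨hps, hpS⟩ := Finset.mem_erase.mp hp
    have := key p hpS hps hpu hpt
    linarith

lemma no_three_hull_edges {S : Finset Pt} {a t b r : Pt}
    (htb : t ≠ b) (htr : t ≠ r) (hbr : b ≠ r)
    (h1 : IsHullEdge S a t) (h2 : IsHullEdge S a b) (h3 : IsHullEdge S a r) : False := by
  obtain ⟨haS, htS, hat, hB1⟩ := h1
  obtain ⟨-, hbS, hab, hB2⟩ := h2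
  obtain ⟨-, hrS, har, hB3⟩ := h3
  have P1 : 0 < det3 a t b * det3 a t r := by
    rcases hB1 with h | h
    · exact mul_pos (h b hbS (Ne.symm hab) htb.symm) (h r hrS (Ne.symm har) htr.symm)
    · exact mul_pos_of_neg_of_neg (h b hbS (Ne.symm hab) htb.symm) (h r hrS (Ne.symm har) htr.symm)
  have P2 : 0 < det3 a b t * det3 a b r := by
    rcases hB2 with h | h
    · exact mul_pos (h t htS (Ne.symm hat) htb) (h r hrS (Ne.symm har) hbr.symm)
    · exact mul_pos_of_neg_of_neg (h t htS (Ne.symm hat) htb) (h r hrS (Ne.symm har) hbr.symm)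
  have P3 : 0 < det3 a r t * det3 a r b := by
    rcases hB3 with h | h
    · exact mul_pos (h t htS (Ne.symm hat) htr) (h b hbS (Ne.symm hab) hbr)
    · exact mul_pos_of_neg_of_neg (h t htS (Ne.symm hat) htr) (h b hbS (Ne.symm hab) hbr)
  rw [show det3 a b t = -det3 a t b from det3_swap23 a t b] at P2
  rw [show det3 a r t = -det3 a t r from det3_swap23 a t r,
      show det3 a r b = -det3 a b r from det3_swap23 a b r] at P3
  nlinarith [mul_pos (mul_pos P1 P3) P2, sq_nonneg (det3 a t b * det3 a t r * det3 a b r)]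

lemma mem_of_getLast? {l : List Pt} {x : Pt} (h : l.getLast? = some x) : x ∈ l := by
  obtain ⟨hne, rfl⟩ := List.mem_getLast?_eq_getLast (Option.mem_def.mpr h)
  exact List.getLast_mem hne

lemma hull_edge_swap {S : Finset Pt} {a b : Pt} (h : IsHullEdge S a b) : IsHullEdge S b a := by
  obtain ⟨ha, hb, hab, hB⟩ := h
  refine ⟨hb, ha, Ne.symm hab, ?_⟩
  rcases hB with h | h
  · right; intro p hp hpb hpa; rw [det3_swap12]; linarith [h p hp hpa hpb]
  · left; intro p hp hpb hpa; rw [det3_swap12]; linarith [h p hp hpa hpb]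

lemma hull_edge_restrict {S : Finset Pt} {a b s : Pt} (h : IsHullEdge S a b)
    (has : a ≠ s) (hbs : b ≠ s) : IsHullEdge (S.erase s) a b := by
  obtain ⟨ha, hb, hab, hB⟩ := h
  refine ⟨Finset.mem_erase.mpr ⟨has, ha⟩, Finset.mem_erase.mpr ⟨hbs, hb⟩, hab, ?_⟩
  rcases hB with h | h
  · left; intro p hp hpa hpb; exact h p (Finset.mem_of_mem_erase hp) hpa hpb
  · right; intro p hp hpa hpb; exact h p (Finset.mem_of_mem_erase hp) hpa hpb

lemma hullVertex_restrict {S : Finset Pt} (hconv : ∀ p ∈ S, HullVertex S p) (s : Pt) :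
    ∀ p ∈ S.erase s, HullVertex (S.erase s) p := by
  intro p hp
  obtain ⟨hps, hpS⟩ := Finset.mem_erase.mp hp
  refine extreme_mono (convexHull_mono ?_) (subset_convexHull ℝ _ (Finset.mem_coe.mpr hp))
    (hconv p hpS)
  intro x hx
  exact Finset.mem_coe.mpr (Finset.mem_of_mem_erase (Finset.mem_coe.mp hx))

lemma planePath_tail {S : Finset Pt} {s : Pt} {rest : List Pt}
    (h : PlanePath S (s :: rest)) : PlanePath (S.erase s) rest := by
  obtain ⟨hnd, hTF, hpl⟩ := h
  have hsrest : s ∉ rest := (List.nodup_cons.mp hnd).1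
  refine ⟨(List.nodup_cons.mp hnd).2, ?_, ?_⟩
  · rw [← hTF, List.toFinset_cons, Finset.erase_insert (by simpa using hsrest)]
  · intro e he f hf hne
    exact hpl e (mem_edgeList_tail s he) f (mem_edgeList_tail s hf) hne

lemma isEdgeOf_tail {x y s : Pt} {L : List Pt} (h : IsEdgeOf x y L) : IsEdgeOf x y (s :: L) := by
  rcases h with h | h
  · exact Or.inl (mem_edgeList_tail s h)
  · exact Or.inr (mem_edgeList_tail s h)

/-- Case where the second vertex of the path equals `a` (one endpoint of the avoided edge). -/
lemma caseA {S : Finset Pt} (hconv : ∀ p ∈ S, HullVertex S p) (hcard : 4 ≤ S.card)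
    {a b s t : Pt} {l'' : List Pt}
    (hab : IsHullEdge S a b) (hst : IsHullEdge S s t)
    (hat : a ≠ t) (hbs : b ≠ s) (hbt : b ≠ t)
    (hpp : PlanePath S (s :: a :: l''))
    (hlast : (s :: a :: l'').getLast? = some t)
    (hnoedge : ¬ IsEdgeOf a b (s :: a :: l'')) : False := by
  have hnd := hpp.1
  have hTF := hpp.2.1
  have hlen : (s :: a :: l'').length = S.card := by
    rw [← hTF, List.toFinset_card_of_nodup hnd]
  have hsa : IsHullEdge S s a := first_edge_hull hconv hpp
  have hsa' : s ≠ a := hsa.2.2.1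
  have hconv' := hullVertex_restrict hconv s
  have hat' : IsHullEdge (S.erase s) a t := hull_edge_merge hconv hsa hst hat
  have hab' : IsHullEdge (S.erase s) a b := hull_edge_restrict hab (Ne.symm hsa') hbs
  -- l'' must have at least two elements
  match l'', hlast, hnd, hlen, hnoedge, hpp with
  | [], hlast, hnd, hlen, hnoedge, hpp => simp at hlen; omega
  | [r], hlast, hnd, hlen, hnoedge, hpp => simp at hlen; omega
  | r :: r2 :: l''', hlast, hnd, hlen, hnoedge, hpp =>
    have hpp' : PlanePath (S.erase s) (a :: r :: r2 :: l''') := planePath_tail hpp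
    have har' : IsHullEdge (S.erase s) a r := first_edge_hull hconv' hpp'
    have htl : t ∈ r2 :: l''' := by
      rw [List.getLast?_cons_cons, List.getLast?_cons_cons, List.getLast?_cons_cons] at hlast
      exact mem_of_getLast? hlast
    have hrt : t ≠ r := by
      intro hc
      subst hc
      have := ((List.nodup_cons.mp ((List.nodup_cons.mp ((List.nodup_cons.mp hnd).2)).2)).1)
      exact this htl
    have hrb : b ≠ r := by
      intro hc
      subst hc
      apply hnoedge
      left
      rw [edgeList_cons₂, edgeList_cons₂]
      exact List.mem_cons_of_mem _ (List.mem_cons_self)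
    exact no_three_hull_edges (Ne.symm hbt) hrt hrb hat' hab' har'

lemma main_ind : ∀ (n : ℕ) (S : Finset Pt), S.card ≤ n →
    (∀ p ∈ S, HullVertex S p) → ∀ a b s t : Pt,
    IsHullEdge S a b → IsHullEdge S s t →
    a ≠ s → a ≠ t → b ≠ s → b ≠ t →
    ∀ l : List Pt, PlanePath S l → l.head? = some s → l.getLast? = some t →
    ¬ IsEdgeOf a b l → False := by
  intro n
  induction n with
  | zero =>
    intro S hcard _ a b s t hab hst has _ _ _ _ _ _ _ _
    have : a ∈ S := hab.1
    have : S.Nonempty := ⟨a, this⟩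
    rw [← Finset.card_pos] at this
    omega
  | succ n ih =>
    intro S hcard hconv a b s t hab hst has hat hbs hbt l hpp hhead hlast hnoedge
    have habne : a ≠ b := hab.2.2.1
    have hstne : s ≠ t := hst.2.2.1
    have hcard4 : 4 ≤ S.card := by
      have hsub : ({a, b, s, t} : Finset Pt) ⊆ S := by
        intro x hx
        simp at hx
        rcases hx with rfl | rfl | rfl | rfl
        exacts [hab.1, hab.2.1, hst.1, hst.2.1]
      refine le_trans (le_of_eq ?_) (Finset.card_le_card hsub)
      rw [Finset.card_insert_of_notMem (by simp [habne, has, hat]),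
        Finset.card_insert_of_notMem (by simp [hbs, hbt]),
        Finset.card_insert_of_notMem (by simp [hstne]), Finset.card_singleton]
    have hlen : l.length = S.card := by
      rw [← hpp.2.1, List.toFinset_card_of_nodup hpp.1]
    match l, hpp, hhead, hlast, hnoedge, hlen with
    | [], _, hhead, _, _, _ => simp at hhead
    | [x], _, hhead, _, _, hlen => simp at hlen; omega
    | x :: q :: l'', hpp, hhead, hlast, hnoedge, hlen =>
      have hxs : s = x := by simpa using hhead.symm
      subst hxs
      have hnd := hpp.1
      have hsq : IsHullEdge S s q := first_edge_hull hconv hpp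
      have hqt : q ≠ t := by
        match l'', hpp, hlast, hnoedge, hlen with
        | [], _, _, _, hlen => simp at hlen; omega
        | y :: l₃, hpp, hlast, hnoedge, hlen =>
          intro hc
          subst hc
          have htmem : q ∈ y :: l₃ := by
            rw [List.getLast?_cons_cons, List.getLast?_cons_cons] at hlast
            exact mem_of_getLast? hlast
          exact (List.nodup_cons.mp (List.nodup_cons.mp hnd).2).1 htmem
      by_cases hqa : q = a
      · subst hqa
        exact caseA hconv hcard4 hab hst hat hbs hbt hpp hlast hnoedge
      · by_cases hqb : q = b
        · subst hqb
          exact caseA hconv hcard4 (hull_edge_swap hab) hst hbt has hat hpp hlast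
            (fun h => hnoedge h.symm)
        · -- generic case: induct on S.erase s
          have hqS : q ∈ S := hsq.2.1
          have hsS : s ∈ S := hsq.1
          have hconv' := hullVertex_restrict hconv s
          have hqt' : IsHullEdge (S.erase s) q t := hull_edge_merge hconv hsq hst hqt
          have hab' : IsHullEdge (S.erase s) a b := hull_edge_restrict hab has hbs
          have hcard' : (S.erase s).card ≤ n := by
            rw [Finset.card_erase_of_mem hsS]; omega
          refine ih (S.erase s) hcard' hconv' a b q t hab' hqt'
            (fun h => hqa h.symm) hat (fun h => hqb h.symm) hbt (q :: l'')
            (planePath_tail hpp) rfl ?_ (fun h => hnoedge (isEdgeOf_tail h))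
          rw [List.getLast?_cons_cons] at hlast
          exact hlast


/-- If `S` is a set of at least 3 points in convex position and `ab`, `st`
are disjoint edges of the convex hull boundary, then there is no plane Hamiltonian path
on `S` with endpoints `s` and `t` avoiding the segment `ab`. -/
theorem stmt_0 (S : Finset Pt) (hcard : 3 ≤ S.card)
    (hconv : ∀ p ∈ S, HullVertex S p)
    (a b s t : Pt)
    (hab : IsHullEdge S a b) (hst : IsHullEdge S s t)
    (has : a ≠ s) (hat : a ≠ t) (hbs : b ≠ s) (hbt : b ≠ t) :
    ¬ ∃ l : List Pt, PlanePath S l ∧ l.head? = some s ∧ l.getLast? = some t ∧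
      ¬ IsEdgeOf a b l := by
  rintro ⟨l, hpp, hhead, hlast, hnoedge⟩
  exact main_ind S.card S le_rfl hconv a b s t hab hst has hat hbs hbt l hpp hhead hlast hnoedge
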